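/- Let k be an algebraically closed field, let f ∈ k[x,y,z] and let ψ ∈ k[x,y] be a nonzero polynomial. Then the following are equivalent: (a) the image of f is a unit in the localization of k[x,y,z] at the multiplicative set of powers of ψ(x,y)·ψ(x,z) (equivalently, f divides (ψ(x,y)·ψ(x,z))^N in k[x,y,z] for some N ≥ 0); (b) for every λ ∈ k such that ψ(λ,y) is a nonzero polynomial in k[y], the image of the specialization f(λ,y,z) is a unit in the localization of k[y,z] at the multiplicative set of powers of ψ(λ,y)·ψ(λ,z). (Lemma 3.3.4, equivalence of (ii) and (iii)) -/

import Mathlib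

open MvPolynomial

/-- Evaluating a composite `aeval` substitution at a point. -/
lemma eval_aeval_point {k : Type*} [CommSemiring k] {m n : ℕ}
    (x : Fin n → k) (g : Fin m → MvPolynomial (Fin n) k) (p : MvPolynomial (Fin m) k) :
    eval x (aeval g p) = eval (fun i => eval x (g i)) p := by
  rw [aeval_def, eval_eval₂]
  have h : (eval x).comp (algebraMap k (MvPolynomial (Fin n) k)) = RingHom.id k := by
    ext r; simp
  rw [h, eval₂_id]

/-- Nullstellensatz reformulation: `F` divides some power of `G` iff `G` vanishes on the
zero locus of `F`. -/
lemma dvd_pow_iff_forall_eval {k : Type*} [Field k] [IsAlgClosed k] {n : ℕ}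
    (F G : MvPolynomial (Fin n) k) :
    (∃ N : ℕ, F ∣ G ^ N) ↔ ∀ x : Fin n → k, eval x F = 0 → eval x G = 0 := by
  constructor
  · rintro ⟨N, h⟩ x hx
    by_contra hG
    have h2 : eval x F ∣ eval x (G ^ N) := map_dvd (eval x) h
    rw [hx, zero_dvd_iff, map_pow] at h2
    exact pow_ne_zero N hG h2
  · intro h
    have hG : G ∈ (Ideal.span {F}).radical := by
      rw [← vanishingIdeal_zeroLocus_eq_radical (K := k), mem_vanishingIdeal_iff]
      intro x hx
      have hF := mem_zeroLocus_iff.mp hx F (Ideal.mem_span_singleton_self F)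
      exact h x hF
    obtain ⟨N, hN⟩ := Ideal.mem_radical_iff.mp hG
    exact ⟨N, Ideal.mem_span_singleton.mp hN⟩

/-- **Lemma 3.3.4, equivalence of (ii) and (iii).** For `f ∈ k[x,y,z]` and `0 ≠ ψ ∈ k[x,y]`:
`f` becomes a unit in the localization of `k[x,y,z]` at the powers of `ψ(x,y)·ψ(x,z)`
(equivalently, `f` divides some power of `ψ(x,y)·ψ(x,z)`) if and only if for every `λ ∈ k` with
`ψ(λ,y) ≠ 0`, the specialization `f(λ,y,z)` becomes a unit in the localization of `k[y,z]` at the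
powers of `ψ(λ,y)·ψ(λ,z)` (equivalently, divides some power of `ψ(λ,y)·ψ(λ,z)`). -/
theorem dvd_pow_iff_specializations_dvd_pow (k : Type*) [Field k] [IsAlgClosed k]
    (f : MvPolynomial (Fin 3) k) (ψ : MvPolynomial (Fin 2) k) (hψ : ψ ≠ 0) :
    (∃ N : ℕ, f ∣ ((aeval ![X 0, X 1] ψ : MvPolynomial (Fin 3) k) *
        (aeval ![X 0, X 2] ψ : MvPolynomial (Fin 3) k)) ^ N) ↔
    (∀ a : k, (aeval ![C a, X 0] ψ : MvPolynomial (Fin 2) k) ≠ 0 →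
      ∃ N : ℕ, (aeval ![C a, X 0, X 1] f : MvPolynomial (Fin 2) k) ∣
        ((aeval ![C a, X 0] ψ : MvPolynomial (Fin 2) k) *
         (aeval ![C a, X 1] ψ : MvPolynomial (Fin 2) k)) ^ N) := by
  rw [dvd_pow_iff_forall_eval]
  constructor
  · intro H a _
    rw [dvd_pow_iff_forall_eval]
    intro y hy
    rw [eval_aeval_point] at hy
    have e1 : (fun i => eval y (![C a, X 0, X 1] i)) = ![a, y 0, y 1] := by
      funext i; fin_cases i <;> simp
    rw [e1] at hy
    have h3 := H ![a, y 0, y 1] hy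
    rw [map_mul, eval_aeval_point, eval_aeval_point] at h3
    rw [map_mul, eval_aeval_point, eval_aeval_point]
    have e2 : (fun i => eval ![a, y 0, y 1] (![(X 0 : MvPolynomial (Fin 3) k), X 1] i))
        = fun i => eval y (![(C a : MvPolynomial (Fin 2) k), X 0] i) := by
      funext i; fin_cases i <;> simp
    have e3 : (fun i => eval ![a, y 0, y 1] (![(X 0 : MvPolynomial (Fin 3) k), X 2] i))
        = fun i => eval y (![(C a : MvPolynomial (Fin 2) k), X 1] i) := by
      funext i; fin_cases i <;> simp
    rw [e2, e3] at h3
    exact h3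
  · intro H x hx
    rw [map_mul, eval_aeval_point, eval_aeval_point]
    have e2 : (fun i => eval x (![(X 0 : MvPolynomial (Fin 3) k), X 1] i))
        = fun i => eval ![x 1, x 2] (![(C (x 0) : MvPolynomial (Fin 2) k), X 0] i) := by
      funext i; fin_cases i <;> simp
    have e3 : (fun i => eval x (![(X 0 : MvPolynomial (Fin 3) k), X 2] i))
        = fun i => eval ![x 1, x 2] (![(C (x 0) : MvPolynomial (Fin 2) k), X 1] i) := by
      funext i; fin_cases i <;> simp
    rw [e2, e3]
    by_cases hz : (aeval ![C (x 0), X 0] ψ : MvPolynomial (Fin 2) k) = 0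
    · have h1 := congrArg (eval ![x 1, x 2]) hz
      rw [eval_aeval_point, map_zero] at h1
      rw [h1, zero_mul]
    · have h2 := (dvd_pow_iff_forall_eval _ _).mp (H (x 0) hz) ![x 1, x 2] (by
        rw [eval_aeval_point]
        have e1 : (fun i => eval ![x 1, x 2] (![C (x 0), X 0, X 1] i)) = x := by
          funext i; fin_cases i <;> simp
        rw [e1]; exact hx)
      rw [map_mul, eval_aeval_point, eval_aeval_point] at h2
      exact h2
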